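/- Let the loss be the cross-entropy loss ℓ_ce(v,i) = −log(v_i) and let the cost be the 0-∞ cost c_ε (c_ε(x, x̃) = 0 if d(x, x̃) ≤ ε and +∞ otherwise). Then the dual problem of Theorem 1.4 has the same value as the problem: infimum over tuples (ψ_i)_{i∈Y} ⊆ 𝒢₀ of −Σ_{i∈Y} ∫_X log(ψ_i(x_i)) dμ_i(x_i), subject to Σ_{i∈A} ψ_i(x_i) ≤ 1 for every A ⊆ Y and every x_A ∈ spt(μ_A) such that the closed ε-balls B_ε(x_i), i ∈ A, have a common point; here 𝒢₀ is the set of functions exp(φ) with φ ∈ 𝒢. Moreover, if (ψ_i^*) solves this problem, then (φ_i^* := log(ψ_i^*)) solves the dual problem of Theorem 1.4. -/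

import Mathlib

open MeasureTheory Set Filter Topology Bornology
open scoped ENNReal BigOperators NNReal

noncomputable section

namespace AdvRobust

variable {X : Type*} {Y : Type*}

/-- The (topological) support of a Borel measure: points all of whose open
neighborhoods have positive measure. -/
def msupport [TopologicalSpace X] [MeasurableSpace X] (μ : Measure X) : Set X :=
  {x | ∀ U : Set X, IsOpen U → x ∈ U → 0 < μ U}

/-- Compactness/coercivity condition on a cost function. -/
def Coercive [MetricSpace X] (c : X → X → ℝ≥0∞) : Prop :=
  ∀ x x' : ℕ → X, IsBounded (Set.range x') →
    (∃ M : ℝ≥0∞, M ≠ ⊤ ∧ ∀ n, c (x n) (x' n) ≤ M) →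
    IsCompact (closure (Set.range fun n => (x n, x' n)))

/-- Assumption 1.2 on the cost function. -/
structure CostAssumption [MetricSpace X] (c : X → X → ℝ≥0∞) : Prop where
  lsc : LowerSemicontinuous (Function.uncurry c)
  diag : ∀ x, c x x = 0
  coer : Coercive c ∨ ∃ (B : ℝ≥0∞) (c₀ : X → X → ℝ≥0∞),
      0 < B ∧ B ≠ ⊤ ∧ Coercive c₀ ∧ ∀ x y, c x y = min (c₀ x y) B

/-- Assumption 1.1 on the loss function: convexity on the simplex, and
finiteness at some common point of the simplex. -/
structure LossAssumption [Fintype Y] (ℓ : (Y → ℝ) → Y → ℝ≥0∞) : Prop where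
  convex : ∀ i : Y, ∀ v ∈ stdSimplex ℝ Y, ∀ w ∈ stdSimplex ℝ Y, ∀ a b : ℝ,
      0 ≤ a → 0 ≤ b → a + b = 1 →
      ℓ (a • v + b • w) i ≤ ENNReal.ofReal a * ℓ v i + ENNReal.ofReal b * ℓ w i
  finite : ∃ v₀ ∈ stdSimplex ℝ Y, ∀ i : Y, ℓ v₀ i ≠ ⊤

/-- Optimal transport cost between two positive measures (`+∞` if there is
no coupling). -/
def OTCost [MeasurableSpace X] (c : X → X → ℝ≥0∞) (μ ν : Measure X) : ℝ≥0∞ :=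
  ⨅ (π : Measure (X × X)) (_ : π.map Prod.fst = μ) (_ : π.map Prod.snd = ν),
    ∫⁻ p, c p.1 p.2 ∂π

/-- The adversarial objective for a fixed classifier `f`. -/
def advObj [MeasurableSpace X] [Fintype Y]
    (c : X → X → ℝ≥0∞) (ℓ : (Y → ℝ) → Y → ℝ≥0∞) (μ : Y → Measure X)
    (f : X → Y → ℝ) : EReal :=
  ⨆ (μ' : Y → Measure X) (_ : ∀ i, IsFiniteMeasure (μ' i)),
    ((∑ i, ∫⁻ x, ℓ (f x) i ∂(μ' i) : ℝ≥0∞) : EReal)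
      - ((∑ i, OTCost c (μ i) (μ' i) : ℝ≥0∞) : EReal)

/-- The adversarial (learner-agnostic) value `V`. -/
def advValue [MeasurableSpace X] [Fintype Y]
    (c : X → X → ℝ≥0∞) (ℓ : (Y → ℝ) → Y → ℝ≥0∞) (μ : Y → Measure X) : EReal :=
  ⨅ (f : X → Y → ℝ) (_ : Measurable f) (_ : ∀ x, f x ∈ stdSimplex ℝ Y),
    advObj c ℓ μ f

/-- `c`-transform of `φ` relative to the set `S`. -/
def cTransform (c : X → X → ℝ≥0∞) (S : Set X) (φ : X → ℝ) (x' : X) : EReal :=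
  ⨅ x ∈ S, ((c x x' : EReal) - (φ x : EReal))

/-- The probability simplex over a subset `A` of labels. -/
def simplexOn [Fintype Y] (A : Finset Y) : Set (Y → ℝ) :=
  {m | (∀ i, 0 ≤ m i) ∧ (∀ i ∉ A, m i = 0) ∧ ∑ i ∈ A, m i = 1}

/-- `ℓ_A(m_A) = inf_{v ∈ Δ_Y} ∑_{i ∈ A} ℓ(v,i) m_i`. -/
def lossOn [Fintype Y] (ℓ : (Y → ℝ) → Y → ℝ≥0∞) (A : Finset Y) (m : Y → ℝ) : ℝ≥0∞ :=
  ⨅ v ∈ stdSimplex ℝ Y, ∑ i ∈ A, ENNReal.ofReal (m i) * ℓ v i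

/-- `c_A(x_A, m_A) = inf_{x̃ ∈ X} ∑_{i ∈ A} m_i c(x_i, x̃)`. -/
def costOn (c : X → X → ℝ≥0∞) (A : Finset Y) (x : Y → X) (m : Y → ℝ) : ℝ≥0∞ :=
  ⨅ x' : X, ∑ i ∈ A, ENNReal.ofReal (m i) * c (x i) x'

/-- Feasibility constraint of the dual problem (1.12). -/
def dualConstraint [TopologicalSpace X] [MeasurableSpace X] [Fintype Y]
    (c : X → X → ℝ≥0∞) (ℓ : (Y → ℝ) → Y → ℝ≥0∞) (μ : Y → Measure X)
    (φ : Y → X → ℝ) : Prop :=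
  ∀ (A : Finset Y) (x : Y → X), (∀ i ∈ A, x i ∈ msupport (μ i)) →
    (⨆ m ∈ simplexOn A,
      (((∑ i ∈ A, m i * φ i (x i) : ℝ) : EReal)
        + (lossOn ℓ A m : EReal) - (costOn c A x m : EReal))) ≤ 0

/-- Value of the dual problem (1.12) over tuples of bounded continuous functions. -/
def dualValueCb [MetricSpace X] [MeasurableSpace X] [Fintype Y]
    (c : X → X → ℝ≥0∞) (ℓ : (Y → ℝ) → Y → ℝ≥0∞) (μ : Y → Measure X) : EReal :=
  ⨅ (φ : Y → BoundedContinuousFunction X ℝ)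
    (_ : dualConstraint c ℓ μ (fun i => (φ i : X → ℝ))),
    (((- ∑ i, ∫ x, φ i x ∂(μ i)) : ℝ) : EReal)

/-- Value of the dual problem (1.12) over tuples from a family `G` of functions. -/
def dualValueG [TopologicalSpace X] [MeasurableSpace X] [Fintype Y]
    (c : X → X → ℝ≥0∞) (ℓ : (Y → ℝ) → Y → ℝ≥0∞) (μ : Y → Measure X)
    (G : Set (X → ℝ)) : EReal :=
  ⨅ (φ : Y → X → ℝ) (_ : ∀ i, φ i ∈ G) (_ : dualConstraint c ℓ μ φ),
    (((- ∑ i, ∫ x, φ i x ∂(μ i)) : ℝ) : EReal)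

/-- The nonnegative part of an extended real, as an extended nonnegative real. -/
def epos (e : EReal) : ℝ≥0∞ := if e = ⊤ then ⊤ else ENNReal.ofReal e.toReal

/-- Extended integral of an extended-real-valued function. -/
def eintegral [MeasurableSpace X] (μ : Measure X) (g : X → EReal) : EReal :=
  ((∫⁻ x, epos (g x) ∂μ : ℝ≥0∞) : EReal) - ((∫⁻ x, epos (-(g x)) ∂μ : ℝ≥0∞) : EReal)


/-- Cross-entropy loss on the simplex, with values in `[0,∞]`. -/
def lossCE' (t : ℝ) : ℝ≥0∞ := if 0 < t then ENNReal.ofReal (-Real.log t) else ⊤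

/-- The `0`-`∞` cost with adversarial budget `ε`. -/
def costEps {X : Type*} [MetricSpace X] (ε : ℝ) : X → X → ℝ≥0∞ :=
  fun x y => if dist x y ≤ ε then 0 else ⊤

/-- Constraint of problem (1.19): `∑_{i ∈ A} ψ_i(x_i) ≤ 1` whenever the closed
`ε`-balls around the points `x_i`, `i ∈ A`, have a common point. -/
def ballConstraint {X Y : Type*} [MetricSpace X] [MeasurableSpace X] [Fintype Y]
    (μ : Y → Measure X) (ε : ℝ) (ψ : Y → X → ℝ) : Prop :=
  ∀ (A : Finset Y) (x : Y → X), (∀ i ∈ A, x i ∈ msupport (μ i)) →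
    (∃ z : X, ∀ i ∈ A, dist z (x i) ≤ ε) →
    ∑ i ∈ A, ψ i (x i) ≤ 1

section CorollaryHelpers

variable {X Y : Type*} [MetricSpace X] [MeasurableSpace X] [Fintype Y]

lemma gibbs_core (A : Finset Y) (m w : Y → ℝ)
    (hm : ∀ i ∈ A, 0 < m i) (hw : ∀ i ∈ A, 0 < w i) (hs : ∑ i ∈ A, m i = 1) :
    ∑ i ∈ A, m i * Real.log (w i / m i) ≤ (∑ i ∈ A, w i) - 1 := by
  rw [← hs, ← Finset.sum_sub_distrib]
  refine Finset.sum_le_sum fun i hi => ?_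
  have h1 : Real.log (w i / m i) ≤ w i / m i - 1 :=
    Real.log_le_sub_one_of_pos (div_pos (hw i hi) (hm i hi))
  calc m i * Real.log (w i / m i) ≤ m i * (w i / m i - 1) :=
        mul_le_mul_of_nonneg_left h1 (hm i hi).le
    _ = w i - m i := by
        rw [mul_sub, mul_one, mul_div_cancel₀ _ (hm i hi).ne']

lemma lossOn_ge (A : Finset Y) (m : Y → ℝ) (hpos : ∀ i ∈ A, 0 < m i)
    (hs : ∑ i ∈ A, m i = 1) :
    ENNReal.ofReal (∑ i ∈ A, m i * (-Real.log (m i))) ≤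
      lossOn (Y := Y) (fun v i => lossCE' (v i)) A m := by
  refine le_iInf₂ fun v hv => ?_
  by_cases hvpos : ∀ i ∈ A, 0 < v i
  · have hterm : ∀ i ∈ A, ENNReal.ofReal (m i) * lossCE' (v i)
        = ENNReal.ofReal (m i * (-Real.log (v i))) := fun i hi => by
      simp only [lossCE']
      rw [if_pos (hvpos i hi), ← ENNReal.ofReal_mul (hpos i hi).le]
    have hv1 : ∀ i, v i ≤ 1 := fun i => by
      rw [← hv.2]
      exact Finset.single_le_sum (fun j _ => hv.1 j) (Finset.mem_univ i)
    have hvA : ∑ i ∈ A, v i ≤ 1 := by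
      rw [← hv.2]
      exact Finset.sum_le_sum_of_subset_of_nonneg (Finset.subset_univ A)
        (fun j _ _ => hv.1 j)
    have hnn : ∀ i ∈ A, 0 ≤ m i * (-Real.log (v i)) := fun i hi =>
      mul_nonneg (hpos i hi).le
        (neg_nonneg.2 (Real.log_nonpos (hvpos i hi).le (hv1 i)))
    rw [Finset.sum_congr rfl hterm, ← ENNReal.ofReal_sum_of_nonneg hnn]
    apply ENNReal.ofReal_le_ofReal
    have h1 := gibbs_core A m v hpos hvpos hs
    have h3 : ∀ i ∈ A, m i * Real.log (v i / m i)
        = m i * (-Real.log (m i)) - m i * (-Real.log (v i)) := fun i hi => by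
      rw [Real.log_div (hvpos i hi).ne' (hpos i hi).ne']; ring
    rw [Finset.sum_congr rfl h3, Finset.sum_sub_distrib] at h1
    linarith
  · push_neg at hvpos
    obtain ⟨i, hi, hvi⟩ := hvpos
    refine le_top.trans (le_of_eq ?_)
    symm
    refine ENNReal.sum_eq_top.2 ⟨i, hi, ?_⟩
    simp only [lossCE']
    rw [if_neg (not_lt.2 hvi), ENNReal.mul_top (ENNReal.ofReal_pos.2 (hpos i hi)).ne']

lemma entropy_sum_nonneg (A : Finset Y) (m : Y → ℝ) (h0 : ∀ i, 0 ≤ m i)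
    (h1 : ∀ i ∈ A, m i ≤ 1) : 0 ≤ ∑ i ∈ A, m i * (-Real.log (m i)) := by
  refine Finset.sum_nonneg fun i hi => ?_
  rcases (h0 i).lt_or_eq with hp | hp
  · exact mul_nonneg (h0 i) (neg_nonneg.2 (Real.log_nonpos hp.le (h1 i hi)))
  · rw [← hp]; simp

lemma lossOn_le (A : Finset Y) (m : Y → ℝ) (hm : m ∈ simplexOn A) :
    lossOn (Y := Y) (fun v i => lossCE' (v i)) A m ≤
      ENNReal.ofReal (∑ i ∈ A, m i * (-Real.log (m i))) := by
  obtain ⟨h0, hz, hs⟩ := hm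
  have hstd : m ∈ stdSimplex ℝ Y := by
    refine ⟨h0, ?_⟩
    rw [← Finset.sum_subset (Finset.subset_univ A) fun i _ hi => hz i hi]
    exact hs
  have hle1 : ∀ i ∈ A, m i ≤ 1 := fun i hi =>
    hs ▸ Finset.single_le_sum (fun j _ => h0 j) hi
  refine le_trans (iInf₂_le m hstd) ?_
  have hterm : ∀ i ∈ A, ENNReal.ofReal (m i) * lossCE' (m i)
      = ENNReal.ofReal (m i * (-Real.log (m i))) := fun i _ => by
    rcases (h0 i).lt_or_eq with hp | hp
    · simp only [lossCE']
      rw [if_pos hp, ← ENNReal.ofReal_mul hp.le]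
    · rw [← hp]; simp
  rw [Finset.sum_congr rfl hterm, ← ENNReal.ofReal_sum_of_nonneg]
  intro i hi
  rcases (h0 i).lt_or_eq with hp | hp
  · exact mul_nonneg hp.le (neg_nonneg.2 (Real.log_nonpos hp.le (hle1 i hi)))
  · rw [← hp]; simp

lemma costOn_eq_zero {ε : ℝ} (A : Finset Y) (x : Y → X) (m : Y → ℝ) (z : X)
    (hz : ∀ i ∈ A, m i ≠ 0 → dist z (x i) ≤ ε) :
    costOn (costEps ε) A x m = 0 := by
  refine le_antisymm (le_trans (iInf_le _ z) ?_) zero_le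
  refine le_of_eq (Finset.sum_eq_zero fun i hi => ?_)
  by_cases hmi : m i = 0
  · simp [hmi]
  · rw [costEps]
    rw [if_pos (by rw [dist_comm]; exact hz i hi hmi), mul_zero]

lemma costOn_eq_top {ε : ℝ} (A : Finset Y) (x : Y → X) (m : Y → ℝ)
    (h0 : ∀ i, 0 ≤ m i)
    (h : ¬ ∃ z : X, ∀ i ∈ A, m i ≠ 0 → dist z (x i) ≤ ε) :
    costOn (costEps ε) A x m = ⊤ := by
  rw [costOn, iInf_eq_top]
  intro x'
  push_neg at h
  obtain ⟨i, hi, hmi, hd⟩ := h x'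
  refine ENNReal.sum_eq_top.2 ⟨i, hi, ?_⟩
  have hmp : 0 < m i := (h0 i).lt_of_ne (Ne.symm hmi)
  rw [costEps]
  rw [if_neg (by rw [dist_comm]; exact not_le.2 hd),
    ENNReal.mul_top (ENNReal.ofReal_pos.2 hmp).ne']

lemma constraint_iff (ε : ℝ) (μ : Y → Measure X) (φ : Y → X → ℝ) :
    dualConstraint (costEps ε) (fun v i => lossCE' (v i)) μ φ ↔
      ballConstraint μ ε (fun i x => Real.exp (φ i x)) := by
  classical
  constructor
  · intro hd A x hx hz
    obtain ⟨z, hz⟩ := hz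
    rcases A.eq_empty_or_nonempty with rfl | hA
    · simp
    set S : ℝ := ∑ i ∈ A, Real.exp (φ i (x i)) with hSdef
    have hSpos : 0 < S := Finset.sum_pos (fun i _ => Real.exp_pos _) hA
    set m : Y → ℝ := fun i => if i ∈ A then Real.exp (φ i (x i)) / S else 0
      with hmdef
    have hmpos : ∀ i ∈ A, 0 < m i := fun i hi => by
      simp only [hmdef, if_pos hi]; positivity
    have hmsum : ∑ i ∈ A, m i = 1 := by
      have hco : ∀ i ∈ A, m i = Real.exp (φ i (x i)) / S := fun i hi => by
        simp only [hmdef, if_pos hi]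
      rw [Finset.sum_congr rfl hco, ← Finset.sum_div, ← hSdef, div_self hSpos.ne']
    have hmmem : m ∈ simplexOn A := by
      refine ⟨fun i => ?_, fun i hi => by simp only [hmdef, if_neg hi], hmsum⟩
      by_cases hi : i ∈ A
      · exact (hmpos i hi).le
      · simp only [hmdef, if_neg hi]; exact le_rfl
    have hterm : (((∑ i ∈ A, m i * φ i (x i) : ℝ) : EReal)
        + ((lossOn (Y := Y) (fun v i => lossCE' (v i)) A m : ℝ≥0∞) : EReal)
        - ((costOn (costEps ε) A x m : ℝ≥0∞) : EReal)) ≤ 0 :=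
      le_trans (le_iSup₂ (f := fun (m : Y → ℝ) (_ : m ∈ simplexOn A) =>
        (((∑ i ∈ A, m i * φ i (x i) : ℝ) : EReal)
          + ((lossOn (Y := Y) (fun v i => lossCE' (v i)) A m : ℝ≥0∞) : EReal)
          - ((costOn (costEps ε) A x m : ℝ≥0∞) : EReal))) m hmmem) (hd A x hx)
    rw [costOn_eq_zero A x m z (fun i hi _ => hz i hi)] at hterm
    have hHval : ∑ i ∈ A, m i * (-Real.log (m i))
        = Real.log S - ∑ i ∈ A, m i * φ i (x i) := by
      have : ∀ i ∈ A, m i * (-Real.log (m i))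
          = m i * Real.log S - m i * φ i (x i) := fun i hi => by
        simp only [hmdef, if_pos hi]
        rw [Real.log_div (Real.exp_pos _).ne' hSpos.ne', Real.log_exp]
        ring
      rw [Finset.sum_congr rfl this, Finset.sum_sub_distrib, ← Finset.sum_mul,
        hmsum, one_mul]
    have hH0 : 0 ≤ ∑ i ∈ A, m i * (-Real.log (m i)) :=
      entropy_sum_nonneg A m (fun i => hmmem.1 i)
        (fun i hi => hmsum ▸ Finset.single_le_sum (fun j _ => hmmem.1 j) hi)
    have hlog : ((Real.log S : ℝ) : EReal) ≤ 0 := by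
      calc ((Real.log S : ℝ) : EReal)
          = (((∑ i ∈ A, m i * φ i (x i))
              + ∑ i ∈ A, m i * (-Real.log (m i)) : ℝ) : EReal) := by
            rw [hHval]; norm_num
        _ = ((∑ i ∈ A, m i * φ i (x i) : ℝ) : EReal)
            + ((ENNReal.ofReal (∑ i ∈ A, m i * (-Real.log (m i))) : ℝ≥0∞)
                : EReal) := by
            rw [EReal.coe_ennreal_ofReal, max_eq_left hH0, EReal.coe_add]
        _ ≤ ((∑ i ∈ A, m i * φ i (x i) : ℝ) : EReal)
            + ((lossOn (Y := Y) (fun v i => lossCE' (v i)) A m : ℝ≥0∞) : EReal) :=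
            add_le_add_right
              (EReal.coe_ennreal_le_coe_ennreal_iff.2 (lossOn_ge A m hmpos hmsum)) _
        _ ≤ 0 := by
            rw [show ((0:ℝ≥0∞) : EReal) = 0 from rfl, sub_zero] at hterm
            exact hterm
    have hS1 : S ≤ 1 := by
      by_contra hh
      push_neg at hh
      exact absurd (Real.log_pos hh)
        (not_lt.2 (by exact_mod_cast hlog : Real.log S ≤ (0:ℝ)))
    simpa [← hSdef] using hS1
  · intro hb A x hx
    refine iSup₂_le fun m hm => ?_
    obtain ⟨h0, hzero, hsum⟩ := hm
    by_cases hex : ∃ z : X, ∀ i ∈ A, m i ≠ 0 → dist z (x i) ≤ ε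
    · obtain ⟨z, hz⟩ := hex
      set A' := A.filter (fun i => m i ≠ 0) with hA'
      have hsub : A' ⊆ A := Finset.filter_subset _ _
      have hmemA' : ∀ i ∈ A', i ∈ A ∧ m i ≠ 0 := fun i hi =>
        Finset.mem_filter.1 hi
      have hzeroA' : ∀ i ∈ A, i ∉ A' → m i = 0 := fun i hi hni => by
        by_contra h
        exact hni (Finset.mem_filter.2 ⟨hi, h⟩)
      have hS : ∑ i ∈ A', Real.exp (φ i (x i)) ≤ 1 := by
        have := hb A' x (fun i hi => hx i (hmemA' i hi).1)
          ⟨z, fun i hi => hz i (hmemA' i hi).1 (hmemA' i hi).2⟩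
        simpa using this
      have hposA' : ∀ i ∈ A', 0 < m i := fun i hi =>
        (h0 i).lt_of_ne (Ne.symm (hmemA' i hi).2)
      have hsum' : ∑ i ∈ A', m i = 1 := by
        rw [Finset.sum_subset hsub fun i hi hni => hzeroA' i hi hni]
        exact hsum
      have hr : ∑ i ∈ A, m i * φ i (x i) = ∑ i ∈ A', m i * φ i (x i) :=
        (Finset.sum_subset hsub fun i hi hni => by
          rw [hzeroA' i hi hni, zero_mul]).symm
      have hH : ∑ i ∈ A, m i * (-Real.log (m i))
          = ∑ i ∈ A', m i * (-Real.log (m i)) :=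
        (Finset.sum_subset hsub fun i hi hni => by
          rw [hzeroA' i hi hni, zero_mul]).symm
      have hkey : ∑ i ∈ A, m i * φ i (x i)
          + ∑ i ∈ A, m i * (-Real.log (m i)) ≤ 0 := by
        rw [hr, hH]
        have h1 := gibbs_core A' m (fun i => Real.exp (φ i (x i))) hposA'
          (fun i _ => Real.exp_pos _) hsum'
        have h3 : ∀ i ∈ A', m i * Real.log (Real.exp (φ i (x i)) / m i)
            = m i * φ i (x i) + m i * (-Real.log (m i)) := fun i hi => by
          rw [Real.log_div (Real.exp_pos _).ne' (hposA' i hi).ne', Real.log_exp]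
          ring
        rw [Finset.sum_congr rfl h3, Finset.sum_add_distrib] at h1
        linarith
      have hH0 : 0 ≤ ∑ i ∈ A, m i * (-Real.log (m i)) :=
        entropy_sum_nonneg A m h0
          (fun i hi => hsum ▸ Finset.single_le_sum (fun j _ => h0 j) hi)
      calc (((∑ i ∈ A, m i * φ i (x i) : ℝ) : EReal)
          + ((lossOn (Y := Y) (fun v i => lossCE' (v i)) A m : ℝ≥0∞) : EReal)
          - ((costOn (costEps ε) A x m : ℝ≥0∞) : EReal))
          ≤ ((∑ i ∈ A, m i * φ i (x i) : ℝ) : EReal)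
            + ((ENNReal.ofReal (∑ i ∈ A, m i * (-Real.log (m i))) : ℝ≥0∞)
                : EReal) - 0 :=
            EReal.sub_le_sub
              (add_le_add_right
                (EReal.coe_ennreal_le_coe_ennreal_iff.2
                  (lossOn_le A m ⟨h0, hzero, hsum⟩)) _)
              (EReal.coe_ennreal_nonneg _)
        _ = (((∑ i ∈ A, m i * φ i (x i))
              + ∑ i ∈ A, m i * (-Real.log (m i)) : ℝ) : EReal) := by
            rw [sub_zero, EReal.coe_ennreal_ofReal, max_eq_left hH0, EReal.coe_add]
        _ ≤ ((0:ℝ) : EReal) := EReal.coe_le_coe_iff.2 hkey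
        _ = 0 := by norm_num
    · rw [costOn_eq_top A x m h0 hex, EReal.coe_ennreal_top, EReal.sub_top]
      exact bot_le

end CorollaryHelpers

/-- Corollary 1.10: for the cross-entropy loss and the `0`-`∞` cost, the dual
problem (1.12) coincides with the `α`-fair-packing-type problem (1.19), and
solutions correspond via `φ = log ψ`. -/
theorem statement4
    {X Y : Type*} [MetricSpace X] [TopologicalSpace.SeparableSpace X] [CompleteSpace X]
    [MeasurableSpace X] [BorelSpace X] [Nonempty X]
    [Fintype Y] [Nonempty Y]
    (ε : ℝ) (hε : 0 < ε)
    (μ : Y → Measure X) (hμfin : ∀ i, IsFiniteMeasure (μ i))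
    (hμ1 : ∑ i, μ i Set.univ = 1)
    (G : Set (X → ℝ)) (hG : ∀ g ∈ G, Measurable g) :
    (⨅ (ψ : Y → X → ℝ)
        (_ : ∀ i, ψ i ∈ {ψ' : X → ℝ | ∃ φ ∈ G, ψ' = fun x => Real.exp (φ x)})
        (_ : ballConstraint μ ε ψ),
        (((- ∑ i, ∫ x, Real.log (ψ i x) ∂(μ i)) : ℝ) : EReal))
      = dualValueG (costEps ε) (fun v i => lossCE' (v i)) μ G ∧
    ∀ ψs : Y → X → ℝ,
      (∀ i, ψs i ∈ {ψ' : X → ℝ | ∃ φ ∈ G, ψ' = fun x => Real.exp (φ x)}) →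
      ballConstraint μ ε ψs →
      ((((- ∑ i, ∫ x, Real.log (ψs i x) ∂(μ i)) : ℝ) : EReal)
        = ⨅ (ψ : Y → X → ℝ)
            (_ : ∀ i, ψ i ∈ {ψ' : X → ℝ | ∃ φ ∈ G, ψ' = fun x => Real.exp (φ x)})
            (_ : ballConstraint μ ε ψ),
            (((- ∑ i, ∫ x, Real.log (ψ i x) ∂(μ i)) : ℝ) : EReal)) →
      ((∀ i, (fun x => Real.log (ψs i x)) ∈ G) ∧
        dualConstraint (costEps ε) (fun v i => lossCE' (v i)) μ
          (fun i x => Real.log (ψs i x)) ∧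
        (((- ∑ i, ∫ x, Real.log (ψs i x) ∂(μ i)) : ℝ) : EReal)
          = dualValueG (costEps ε) (fun v i => lossCE' (v i)) μ G) := by
  have key : (⨅ (ψ : Y → X → ℝ)
        (_ : ∀ i, ψ i ∈ {ψ' : X → ℝ | ∃ φ ∈ G, ψ' = fun x => Real.exp (φ x)})
        (_ : ballConstraint μ ε ψ),
        (((- ∑ i, ∫ x, Real.log (ψ i x) ∂(μ i)) : ℝ) : EReal))
      = dualValueG (costEps ε) (fun v i => lossCE' (v i)) μ G := by
    apply le_antisymm
    · refine le_iInf fun φ => le_iInf fun hφG => le_iInf fun hφd => ?_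
      have h1 : ∀ i, (fun x => Real.exp (φ i x)) ∈
          {ψ' : X → ℝ | ∃ φ' ∈ G, ψ' = fun x => Real.exp (φ' x)} :=
        fun i => ⟨φ i, hφG i, rfl⟩
      have h2 : ballConstraint μ ε (fun i x => Real.exp (φ i x)) :=
        (constraint_iff ε μ φ).1 hφd
      refine le_trans (iInf_le _ (fun i x => Real.exp (φ i x))) ?_
      refine le_trans (iInf_le _ h1) (le_trans (iInf_le _ h2) ?_)
      simp [Real.log_exp]
    · refine le_iInf fun ψ => le_iInf fun hψ => le_iInf fun hb => ?_
      choose φf hφfG hψeq using hψ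
      have hbe : ballConstraint μ ε (fun i x => Real.exp (φf i x)) := by
        have : ψ = fun i x => Real.exp (φf i x) := funext fun i => hψeq i
        rwa [this] at hb
      have hd : dualConstraint (costEps ε) (fun v i => lossCE' (v i)) μ φf :=
        (constraint_iff ε μ φf).2 hbe
      refine le_trans (iInf_le _ φf)
        (le_trans (iInf_le _ hφfG) (le_trans (iInf_le _ hd) (le_of_eq ?_)))
      have hint : ∀ i, ∫ x, Real.log (ψ i x) ∂(μ i) = ∫ x, φf i x ∂(μ i) :=
        fun i => by rw [hψeq i]; simp [Real.log_exp]
      simp only [hint]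
  refine ⟨key, fun ψs hψs hbs hopt => ?_⟩
  choose φf hφfG hψeq using hψs
  have hfe : (fun i x => Real.log (ψs i x)) = φf :=
    funext fun i => funext fun x => by
      rw [congrFun (hψeq i) x, Real.log_exp]
  refine ⟨?_, ?_, hopt.trans key⟩
  · intro i
    have : (fun x => Real.log (ψs i x)) = φf i := congrFun hfe i
    rw [this]; exact hφfG i
  · rw [hfe]
    refine (constraint_iff ε μ φf).2 ?_
    have : ψs = fun i x => Real.exp (φf i x) := funext fun i => hψeq i
    rwa [this] at hbs

end AdvRobust
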